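/- Let G = (A, s, T) be a generalised reachability game on a game arena A with start vertex s and singleton targets T = {t_1, ..., t_n}, and set t_0 := s. Define the preorder graph P on vertex set {t_0, t_1, ..., t_n} with an edge t_i → t_j if and only if t_i ∈ Attr({t_j}). Then the maximum cardinality of a set T' ⊆ T such that Eve has a strategy ensuring that every consistent play from s visits every element of T' equals the maximum, over all directed paths C_0 C_1 ... C_r in the condensation of P with t_0 ∈ C_0, of the sum Σ_{j=0}^{r} |T ∩ C_j|. -/

import Mathlib

/-- A game arena: a finite directed graph in which every vertex has at least one
outgoing edge, together with the set of vertices controlled by Eve (the remaining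
vertices are controlled by Adam). -/
structure Arena (V : Type*) [Fintype V] where
  E : V → V → Prop
  VEve : Set V
  succ_nonempty : ∀ v, ∃ w, E v w

variable {V : Type*} [Fintype V]

/-- An infinite play starting from `s`. -/
def IsPlay (A : Arena V) (s : V) (p : ℕ → V) : Prop :=
  p 0 = s ∧ ∀ i, A.E (p i) (p (i + 1))

/-- The play `p` visits the set `S`. -/
def Visits (p : ℕ → V) (S : Set V) : Prop := ∃ i, p i ∈ S

/-- A strategy maps a history (the sequence of previously visited vertices)
together with the current vertex to a next vertex. -/
def Strategy (V : Type*) : Type _ := List V → V → V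

/-- A strategy is valid if it always moves along an edge. -/
def ValidStrategy (A : Arena V) (σ : Strategy V) : Prop :=
  ∀ h v, A.E v (σ h v)

/-- The history `v_0 ... v_{i-1}` of the play `p` before time `i`. -/
def hist (p : ℕ → V) (i : ℕ) : List V := List.ofFn fun j : Fin i => p j

/-- The play `p` is consistent with the Eve-strategy `σ`. -/
def ConsistentEve (A : Arena V) (σ : Strategy V) (p : ℕ → V) : Prop :=
  ∀ i, p i ∈ A.VEve → p (i + 1) = σ (hist p i) (p i)

/-- The play `p` is consistent with the Adam-strategy `σ`. -/
def ConsistentAdam (A : Arena V) (σ : Strategy V) (p : ℕ → V) : Prop :=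
  ∀ i, p i ∉ A.VEve → p (i + 1) = σ (hist p i) (p i)

/-- The `i`-step Eve-attractor of the set `S`. -/
def AttrN (A : Arena V) (S : Set V) : ℕ → Set V
  | 0 => S
  | i + 1 => AttrN A S i ∪ {u | u ∈ A.VEve ∧ ∃ v, A.E u v ∧ v ∈ AttrN A S i}
      ∪ {u | u ∉ A.VEve ∧ ∀ v, A.E u v → v ∈ AttrN A S i}

/-- The Eve-attractor of the set `S`. -/
def Attr (A : Arena V) (S : Set V) : Set V := ⋃ i, AttrN A S i

/-- Eve wins the generalised reachability game with target sets `F i`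
from `s` if she has a strategy such that every consistent play from `s`
visits every target set. -/
def EveWins {ι : Type*} (A : Arena V) (s : V) (F : ι → Set V) : Prop :=
  ∃ σ : Strategy V, ValidStrategy A σ ∧
    ∀ p, IsPlay A s p → ConsistentEve A σ p → ∀ i, Visits p (F i)

/-- A strongly connected component of the directed graph `E`: a maximal
(nonempty) set of vertices each reachable from every other. -/
def IsSCC {W : Type*} (E : W → W → Prop) (C : Set W) : Prop :=
  C.Nonempty ∧ (∀ u ∈ C, ∀ v ∈ C, Relation.ReflTransGen E u v) ∧
    ∀ D : Set W, C ⊆ D → (∀ u ∈ D, ∀ v ∈ D, Relation.ReflTransGen E u v) → D = C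

/-- An edge of the condensation of `E`, between two (distinct) SCCs. -/
def CondEdge {W : Type*} (E : W → W → Prop) (C C' : Set W) : Prop :=
  C ≠ C' ∧ ∃ u ∈ C, ∃ v ∈ C', E u v

/-- The preorder graph on the vertices `t 0 = s, t 1, ..., t n`:
an edge from `u` to `v` iff `u ∈ Attr({v})`. -/
def Pedge (A : Arena V) (s : V) {n : ℕ} (t : Fin n → V) (u v : V) : Prop :=
  (u = s ∨ ∃ i, u = t i) ∧ (v = s ∨ ∃ i, v = t i) ∧ u ∈ Attr A ({v} : Set V)

section Aux
variable {V : Type*} [Fintype V]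

noncomputable def defSucc (A : Arena V) (v : V) : V := (A.succ_nonempty v).choose

lemma defSucc_edge (A : Arena V) (v : V) : A.E v (defSucc A v) := (A.succ_nonempty v).choose_spec

lemma attrN_succ_superset (A : Arena V) (S : Set V) (i : ℕ) : AttrN A S i ⊆ AttrN A S (i+1) :=
  fun v hv => Or.inl (Or.inl hv)

lemma attrN_mono (A : Arena V) (S : Set V) {i j : ℕ} (h : i ≤ j) : AttrN A S i ⊆ AttrN A S j := by
  induction j with
  | zero => simpa [Nat.le_zero.mp h]
  | succ j ih =>
    rcases Nat.lt_or_ge i (j+1) with h' | h'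
    · exact (ih (Nat.lt_succ_iff.mp h')).trans (attrN_succ_superset A S j)
    · have : i = j + 1 := le_antisymm h h'
      simp [this]

lemma subset_attr (A : Arena V) (S : Set V) : S ⊆ Attr A S :=
  fun v hv => Set.mem_iUnion.mpr ⟨0, hv⟩

lemma mem_attr_iff (A : Arena V) (S : Set V) (v : V) :
    v ∈ Attr A S ↔ ∃ i, v ∈ AttrN A S i := Set.mem_iUnion

lemma attr_eve_step (A : Arena V) (S : Set V) {v w : V} (hv : v ∈ A.VEve)
    (hE : A.E v w) (hw : w ∈ Attr A S) : v ∈ Attr A S := by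
  obtain ⟨i, hi⟩ := (mem_attr_iff A S w).mp hw
  exact (mem_attr_iff A S v).mpr ⟨i+1, Or.inl (Or.inr ⟨hv, w, hE, hi⟩)⟩

lemma attr_adam_step (A : Arena V) (S : Set V) {v : V} (hv : v ∉ A.VEve)
    (h : ∀ w, A.E v w → w ∈ Attr A S) : v ∈ Attr A S := by
  classical
  set N := Finset.univ.sup (fun w : V => sInf {i | w ∈ AttrN A S i}) with hN
  have hsucc : ∀ w, A.E v w → w ∈ AttrN A S N := by
    intro w hw
    have hne : {i | w ∈ AttrN A S i}.Nonempty := (mem_attr_iff A S w).mp (h w hw)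
    have h1 : w ∈ AttrN A S (sInf {i | w ∈ AttrN A S i}) := Nat.sInf_mem hne
    exact attrN_mono A S (Finset.le_sup (Finset.mem_univ w)) h1
  exact (mem_attr_iff A S v).mpr ⟨N+1, Or.inr ⟨hv, fun w hw => hsucc w hw⟩⟩

lemma attrN_mono_set (A : Arena V) {S S' : Set V} (h : S ⊆ S') (i : ℕ) :
    AttrN A S i ⊆ AttrN A S' i := by
  induction i with
  | zero => exact h
  | succ i ih =>
    rintro v (⟨hv | ⟨hv, w, hE, hw⟩⟩ | ⟨hv, hall⟩)
    · exact Or.inl (Or.inl (ih hv))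
    · exact Or.inl (Or.inr ⟨hv, w, hE, ih hw⟩)
    · exact Or.inr ⟨hv, fun w hw => ih (hall w hw)⟩

lemma attr_mono (A : Arena V) {S S' : Set V} (h : S ⊆ S') : Attr A S ⊆ Attr A S' := by
  intro v hv
  obtain ⟨i, hi⟩ := (mem_attr_iff A S v).mp hv
  exact (mem_attr_iff A S' v).mpr ⟨i, attrN_mono_set A h i hi⟩

lemma attr_idem (A : Arena V) (S : Set V) : Attr A (Attr A S) ⊆ Attr A S := by
  intro v hv
  obtain ⟨i, hi⟩ := (mem_attr_iff A (Attr A S) v).mp hv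
  clear hv
  induction i generalizing v with
  | zero => exact hi
  | succ i ih =>
    rcases hi with ⟨hv | ⟨hv, w, hE, hw⟩⟩ | ⟨hv, hall⟩
    · exact ih hv
    · exact attr_eve_step A S hv hE (ih hw)
    · exact attr_adam_step A S hv (fun w hw => ih (hall w hw))

lemma attr_trans (A : Arena V) {u v w : V} (h1 : u ∈ Attr A {v}) (h2 : v ∈ Attr A {w}) :
    u ∈ Attr A ({w} : Set V) := by
  have : Attr A {v} ⊆ Attr A (Attr A {w}) := attr_mono A (by simpa using h2)
  exact attr_idem A {w} (this h1)

noncomputable def rk (A : Arena V) (S : Set V) (v : V) : ℕ := sInf {i | v ∈ AttrN A S i}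

open Classical in
noncomputable def aStr (A : Arena V) (S : Set V) (v : V) : V :=
  if h : ∃ w, A.E v w ∧ w ∈ AttrN A S (rk A S v - 1) then h.choose else defSucc A v

lemma aStr_edge (A : Arena V) (S : Set V) (v : V) : A.E v (aStr A S v) := by
  classical
  unfold aStr
  split
  · next h => exact h.choose_spec.1
  · exact defSucc_edge A v

lemma aStr_mem (A : Arena V) (S : Set V) {v : V} (hv : v ∈ A.VEve) (hA : v ∈ Attr A S)
    (hS : v ∉ S) : aStr A S v ∈ AttrN A S (rk A S v - 1) := by
  classical
  have hne : {i | v ∈ AttrN A S i}.Nonempty := (mem_attr_iff A S v).mp hA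
  have hmem : v ∈ AttrN A S (rk A S v) := Nat.sInf_mem hne
  have hrk : rk A S v ≠ 0 := by
    intro h0
    rw [h0] at hmem
    exact hS hmem
  obtain ⟨m, hm⟩ := Nat.exists_eq_succ_of_ne_zero hrk
  have hnotm : v ∉ AttrN A S m := by
    intro hmm
    have h2 : rk A S v ≤ m := Nat.sInf_le hmm
    omega
  rw [hm] at hmem
  have hex : ∃ w, A.E v w ∧ w ∈ AttrN A S (rk A S v - 1) := by
    rcases hmem with ⟨h1 | ⟨_, w, hE, hw⟩⟩ | ⟨h3, _⟩
    · exact absurd h1 hnotm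
    · exact ⟨w, hE, by rw [hm]; simpa using hw⟩
    · exact absurd hv h3
  unfold aStr
  rw [dif_pos hex]
  exact hex.choose_spec.2

lemma reach (A : Arena V) (S : Set V) : ∀ (N : ℕ) (p : ℕ → V),
    (∀ i, A.E (p i) (p (i+1))) →
    (∀ i, (∀ i' ≤ i, p i' ∉ S) → p i ∈ A.VEve → p (i+1) = aStr A S (p i)) →
    p 0 ∈ AttrN A S N → ∃ i, p i ∈ S := by
  intro N
  induction N using Nat.strong_induction_on with
  | _ N ih =>
    intro p hp hc h0
    by_cases h0S : p 0 ∈ S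
    · exact ⟨0, h0S⟩
    have hA : p 0 ∈ Attr A S := (mem_attr_iff A S (p 0)).mpr ⟨N, h0⟩
    have hne : {i | p 0 ∈ AttrN A S i}.Nonempty := ⟨N, h0⟩
    have hrk0 : rk A S (p 0) ≠ 0 := by
      intro h'
      have := Nat.sInf_mem hne
      rw [rk] at h'
      rw [h'] at this
      exact h0S this
    obtain ⟨m, hm⟩ := Nat.exists_eq_succ_of_ne_zero hrk0
    have hmN : m < N := by
      have : rk A S (p 0) ≤ N := Nat.sInf_le h0
      omega
    have h1 : p 1 ∈ AttrN A S m := by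
      by_cases hv : p 0 ∈ A.VEve
      · have := hc 0 (by intro i' hi'; interval_cases i' <;> exact h0S) hv
        rw [this]
        have := aStr_mem A S hv hA h0S
        rwa [hm, Nat.succ_sub_one] at this
      · have hmem : p 0 ∈ AttrN A S (rk A S (p 0)) := Nat.sInf_mem hne
        rw [hm] at hmem
        have hnotm : p 0 ∉ AttrN A S m := by
          intro hmm
          have h2 : rk A S (p 0) ≤ m := Nat.sInf_le hmm
          omega
        rcases hmem with ⟨hh | ⟨he, _⟩⟩ | ⟨_, hall⟩
        · exact absurd hh hnotm
        · exact absurd he hv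
        · exact hall (p 1) (hp 0)
    obtain ⟨i, hi⟩ := ih m hmN (fun i => p (i+1)) (fun i => hp (i+1))
      (by
        intro i hno hv
        exact hc (i+1) (by
          intro i' hi'
          rcases Nat.eq_zero_or_pos i' with h' | h'
          · rw [h']; exact h0S
          · obtain ⟨i'', rfl⟩ := Nat.exists_eq_succ_of_ne_zero (Nat.pos_iff_ne_zero.mp h')
            exact hno i'' (by omega)) hv)
      h1
    exact ⟨i+1, hi⟩

open Classical in
noncomputable def tStr (A : Arena V) (S : Set V) (v : V) : V :=
  if h : ∃ w, A.E v w ∧ w ∉ Attr A S then h.choose else defSucc A v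

lemma tStr_edge (A : Arena V) (S : Set V) (v : V) : A.E v (tStr A S v) := by
  classical
  unfold tStr
  split
  · next h => exact h.choose_spec.1
  · exact defSucc_edge A v

lemma eve_stay (A : Arena V) (S : Set V) {v w : V} (hv : v ∈ A.VEve)
    (hA : v ∉ Attr A S) (hE : A.E v w) : w ∉ Attr A S :=
  fun hw => hA (attr_eve_step A S hv hE hw)

lemma tStr_avoid (A : Arena V) (S : Set V) {v : V} (hv : v ∉ A.VEve)
    (hA : v ∉ Attr A S) : tStr A S v ∉ Attr A S := by
  classical
  have hex : ∃ w, A.E v w ∧ w ∉ Attr A S := by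
    by_contra h
    push_neg at h
    exact hA (attr_adam_step A S hv h)
  unfold tStr
  rw [dif_pos hex]
  exact hex.choose_spec.2

lemma avoid (A : Arena V) (S : Set V) (p : ℕ → V)
    (hp : ∀ i, A.E (p i) (p (i+1)))
    (hadam : ∀ i, p i ∉ A.VEve → p (i+1) = tStr A S (p i))
    (h0 : p 0 ∉ Attr A S) : ∀ i, p i ∉ Attr A S := by
  intro i
  induction i with
  | zero => exact h0
  | succ i ih =>
    by_cases hv : p i ∈ A.VEve
    · exact eve_stay A S hv ih (hp i)
    · rw [hadam i hv]; exact tStr_avoid A S hv ih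

end Aux
section Play
variable {V : Type*} [Fintype V]

lemma hist_succ (p : ℕ → V) (n : ℕ) : hist p (n+1) = hist p n ++ [p n] := by
  rw [hist, List.ofFn_succ', List.concat_eq_append]
  rfl

open Classical in
noncomputable def stepFn (A : Arena V) (σ τ : Strategy V) (s : V) (l : List V) : V :=
  match l with
  | [] => s
  | v :: _ => if v ∈ A.VEve then σ l.reverse.dropLast v else τ l.reverse.dropLast v

noncomputable def playAux (A : Arena V) (σ τ : Strategy V) (s : V) : ℕ → List V
  | 0 => [s]
  | n+1 => stepFn A σ τ s (playAux A σ τ s n) :: playAux A σ τ s n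

noncomputable def playOf (A : Arena V) (σ τ : Strategy V) (s : V) (n : ℕ) : V :=
  (playAux A σ τ s n).headD s

lemma playOf_zero (A : Arena V) (σ τ : Strategy V) (s : V) : playOf A σ τ s 0 = s := rfl

lemma playAux_eq_cons (A : Arena V) (σ τ : Strategy V) (s : V) (n : ℕ) :
    playAux A σ τ s n = playOf A σ τ s n :: (playAux A σ τ s n).tail := by
  cases n <;> rfl

lemma playAux_reverse (A : Arena V) (σ τ : Strategy V) (s : V) (n : ℕ) :
    (playAux A σ τ s n).reverse = hist (playOf A σ τ s) n ++ [playOf A σ τ s n] := by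
  induction n with
  | zero => simp [playAux, playOf, hist]
  | succ n ih =>
    have h1 : playAux A σ τ s (n+1) = playOf A σ τ s (n+1) :: playAux A σ τ s n := by
      conv_lhs => rw [playAux_eq_cons]
      rfl
    rw [h1, List.reverse_cons, ih, hist_succ]

open Classical in
lemma playOf_succ (A : Arena V) (σ τ : Strategy V) (s : V) (n : ℕ) :
    playOf A σ τ s (n+1) =
      if playOf A σ τ s n ∈ A.VEve
      then σ (hist (playOf A σ τ s) n) (playOf A σ τ s n)
      else τ (hist (playOf A σ τ s) n) (playOf A σ τ s n) := by
  have h1 : playOf A σ τ s (n+1) = stepFn A σ τ s (playAux A σ τ s n) := rfl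
  rw [h1]
  conv_lhs => rw [playAux_eq_cons A σ τ s n]
  show (if playOf A σ τ s n ∈ A.VEve
      then σ (playOf A σ τ s n :: (playAux A σ τ s n).tail).reverse.dropLast (playOf A σ τ s n)
      else τ (playOf A σ τ s n :: (playAux A σ τ s n).tail).reverse.dropLast (playOf A σ τ s n)) = _
  rw [← playAux_eq_cons, playAux_reverse, List.dropLast_concat]

lemma playOf_isPlay (A : Arena V) {σ τ : Strategy V} (hσ : ValidStrategy A σ)
    (hτ : ValidStrategy A τ) (s : V) : IsPlay A s (playOf A σ τ s) := by
  refine ⟨rfl, fun i => ?_⟩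
  rw [playOf_succ]
  split
  · exact hσ _ _
  · exact hτ _ _

lemma playOf_consistentEve (A : Arena V) (σ τ : Strategy V) (s : V) :
    ConsistentEve A σ (playOf A σ τ s) := by
  intro i hi
  rw [playOf_succ, if_pos hi]

lemma playOf_consistentAdam (A : Arena V) (σ τ : Strategy V) (s : V) :
    ConsistentAdam A τ (playOf A σ τ s) := by
  intro i hi
  rw [playOf_succ, if_neg hi]

end Play

section Stage
variable {V : Type*} [Fintype V]

open Classical in
noncomputable def stgStep (u : ℕ → V) (k : ℕ) (j : ℕ) (v : V) : ℕ :=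
  if j < k ∧ v = u (j+1) then j+1 else j

noncomputable def stg (u : ℕ → V) (k : ℕ) (l : List V) : ℕ := l.foldl (stgStep u k) 0

lemma stg_append (u : ℕ → V) (k : ℕ) (l : List V) (v : V) :
    stg u k (l ++ [v]) = stgStep u k (stg u k l) v := by
  simp [stg, List.foldl_append]

open Classical in
noncomputable def comp (A : Arena V) (u : ℕ → V) (k : ℕ) : Strategy V := fun h v =>
  if stg u k (h ++ [v]) < k then aStr A {u (stg u k (h ++ [v]) + 1)} v else defSucc A v

lemma comp_valid (A : Arena V) (u : ℕ → V) (k : ℕ) : ValidStrategy A (comp A u k) := by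
  intro h v
  classical
  unfold comp
  split
  · exact aStr_edge A _ v
  · exact defSucc_edge A v

lemma comp_visits (A : Arena V) (u : ℕ → V) (k : ℕ)
    (hchain : ∀ j, j < k → u j ∈ Attr A {u (j+1)})
    (hinj : ∀ j ≤ k, ∀ j' ≤ k, u j = u j' → j = j')
    (p : ℕ → V) (hp : IsPlay A (u 0) p) (hc : ConsistentEve A (comp A u k) p) :
    ∀ j ≤ k, ∃ i, p i = u j := by
  classical
  obtain ⟨hp0, hpE⟩ := hp
  suffices H : ∀ j ≤ k, ∃ i, p i = u j ∧ stg u k (hist p (i+1)) = j by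
    intro j hj; obtain ⟨i, hi, _⟩ := H j hj; exact ⟨i, hi⟩
  intro j hj
  induction j with
  | zero =>
    refine ⟨0, hp0, ?_⟩
    have : hist p 1 = [p 0] := by
      rw [show (1:ℕ) = 0 + 1 from rfl, hist_succ]
      simp [hist]
    rw [this]
    show stgStep u k (stg u k []) (p 0) = 0
    unfold stgStep
    rw [if_neg]
    · rfl
    · rintro ⟨hk, heq⟩
      rw [hp0] at heq
      have h01 : stg u k [] = 0 := rfl
      rw [h01] at heq hk
      have := hinj 0 (by omega) 1 (by omega) heq
      omega
  | succ j ihj =>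
    obtain ⟨i, hpi, hstg⟩ := ihj (by omega)
    have hjk : j < k := by omega
    -- sub-claim: while u (j+1) is not hit, the stage stays j
    have subA : ∀ m, (∀ m' ≤ m, p (i+m') ≠ u (j+1)) → stg u k (hist p (i+m+1)) = j := by
      intro m
      induction m with
      | zero => intro _; simpa using hstg
      | succ m ihm =>
        intro hno
        have h1 : i + (m+1) + 1 = (i + m + 1) + 1 := by omega
        rw [h1, hist_succ, stg_append, ihm (fun m' hm' => hno m' (by omega))]
        unfold stgStep
        rw [if_neg]
        rintro ⟨_, heq⟩
        exact hno (m+1) le_rfl (by rw [show i+(m+1) = i+m+1 from by omega]; exact heq)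
    -- apply the reach lemma to the shifted play
    obtain ⟨N, hN⟩ := (mem_attr_iff A _ _).mp (hchain j hjk)
    obtain ⟨M, hM⟩ := reach A {u (j+1)} N (fun m => p (i+m))
      (fun m => by simpa [show i+m+1 = i+(m+1) from by omega] using hpE (i+m))
      (by
        intro m hno hv
        have hno' : ∀ m' ≤ m, p (i+m') ≠ u (j+1) := by
          intro m' hm'
          simpa using hno m' hm'
        have hstep := hc (i+m) hv
        show p (i + (m+1)) = aStr A {u (j+1)} (p (i+m))
        have h2 : i + (m+1) = (i+m) + 1 := by omega
        rw [h2, hstep]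
        unfold comp
        have h3 : hist p (i+m) ++ [p (i+m)] = hist p (i+m+1) := (hist_succ p (i+m)).symm
        rw [h3]
        rw [subA m hno', if_pos hjk])
      (by simpa [hpi] using hN)
    simp only [Set.mem_singleton_iff] at hM
    -- M is a hit; take the least hit
    have hex : ∃ m, p (i+m) = u (j+1) := ⟨M, hM⟩
    set M0 := Nat.find hex with hM0
    have hM0spec : p (i+M0) = u (j+1) := Nat.find_spec hex
    have hM0min : ∀ m < M0, p (i+m) ≠ u (j+1) := fun m hm => Nat.find_min hex hm
    have hM0pos : M0 ≠ 0 := by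
      intro h0
      rw [h0] at hM0spec
      simp only [Nat.add_zero] at hM0spec
      rw [hpi] at hM0spec
      exact Nat.lt_irrefl j (by
        have := hinj j (by omega) (j+1) hj hM0spec
        omega)
    obtain ⟨M', hM'⟩ := Nat.exists_eq_succ_of_ne_zero hM0pos
    refine ⟨i + M0, hM0spec, ?_⟩
    rw [hist_succ, stg_append]
    have h5 : stg u k (hist p (i+M0)) = j := by
      have := subA M' (fun m' hm' => hM0min m' (by omega))
      rw [show i + M' + 1 = i + M0 from by omega] at this
      exact this
    rw [h5]
    unfold stgStep
    rw [if_pos ⟨hjk, hM0spec⟩]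

end Stage
section SCC
open Relation
variable {W : Type*}

def sccOf (P : W → W → Prop) (u : W) : Set W :=
  {v | ReflTransGen P u v ∧ ReflTransGen P v u}

lemma mem_sccOf_self (P : W → W → Prop) (u : W) : u ∈ sccOf P u :=
  ⟨ReflTransGen.refl, ReflTransGen.refl⟩

lemma sccOf_mutual (P : W → W → Prop) (u : W) :
    ∀ x ∈ sccOf P u, ∀ y ∈ sccOf P u, ReflTransGen P x y :=
  fun _ hx _ hy => hx.2.trans hy.1

lemma isSCC_sccOf (P : W → W → Prop) (u : W) : IsSCC P (sccOf P u) := by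
  refine ⟨⟨u, mem_sccOf_self P u⟩, sccOf_mutual P u, ?_⟩
  intro D hsub hmut
  apply Set.Subset.antisymm _ hsub
  intro d hd
  exact ⟨hmut u (hsub (mem_sccOf_self P u)) d hd, hmut d hd u (hsub (mem_sccOf_self P u))⟩

lemma isSCC_eq_sccOf {P : W → W → Prop} {C : Set W} (h : IsSCC P C) {u : W} (hu : u ∈ C) :
    C = sccOf P u := by
  have hsub : C ⊆ sccOf P u := fun v hv => ⟨h.2.1 u hu v hv, h.2.1 v hv u hu⟩
  exact (h.2.2 (sccOf P u) hsub (sccOf_mutual P u)).symm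

lemma sccOf_eq_of_mutual {P : W → W → Prop} {u v : W} (h1 : ReflTransGen P u v)
    (h2 : ReflTransGen P v u) : sccOf P u = sccOf P v := by
  ext x
  constructor
  · rintro ⟨ha, hb⟩; exact ⟨h2.trans ha, hb.trans h1⟩
  · rintro ⟨ha, hb⟩; exact ⟨h1.trans ha, hb.trans h2⟩

/-- Distinct SCCs are disjoint. -/
lemma isSCC_disjoint {P : W → W → Prop} {C D : Set W} (hC : IsSCC P C) (hD : IsSCC P D)
    (hne : C ≠ D) : Disjoint C D := by
  rw [Set.disjoint_left]
  intro x hxC hxD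
  exact hne ((isSCC_eq_sccOf hC hxC).trans (isSCC_eq_sccOf hD hxD).symm)

/-- Every vertex of any SCC in a condensation path is `ReflTransGen`-reachable from every
vertex of an earlier SCC. -/
lemma scc_path_reach {P : W → W → Prop} {r : ℕ} {C : ℕ → Set W}
    (hSCC : ∀ j ≤ r, IsSCC P (C j)) (hE : ∀ j < r, CondEdge P (C j) (C (j+1))) :
    ∀ (d j : ℕ), j + d ≤ r → ∀ x ∈ C j, ∀ y ∈ C (j + d), ReflTransGen P x y := by
  intro d
  induction d with
  | zero => intro j hj x hx y hy; exact (hSCC j (by omega)).2.1 x hx y hy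
  | succ d ih =>
    intro j hj x hx y hy
    obtain ⟨-, a, ha, b, hb, hab⟩ := hE (j + d) (by omega)
    have h1 : ReflTransGen P x a := ih j (by omega) x hx a ha
    have h2 : ReflTransGen P b y := by
      have := (hSCC (j + d + 1) (by omega)).2.1 b hb y (by rw [show j + (d+1) = j + d + 1 from by omega] at hy; exact hy)
      exact this
    exact (h1.tail hab).trans h2

/-- The SCCs along a condensation path are pairwise distinct. -/
lemma scc_path_nodup {P : W → W → Prop} {r : ℕ} {C : ℕ → Set W}
    (hSCC : ∀ j ≤ r, IsSCC P (C j)) (hE : ∀ j < r, CondEdge P (C j) (C (j+1))) :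
    ∀ j < r, ∀ j', j < j' → j' ≤ r → C j ≠ C j' := by
  intro j hj j' hjj' hj'r heq
  -- C (j+1) and C j become mutually reachable
  have hback : ∀ x ∈ C (j+1), ∀ y ∈ C j, ReflTransGen P x y := by
    intro x hx y hy
    exact scc_path_reach hSCC hE (j' - (j+1)) (j+1) (by omega) x hx y
      (by rw [show j + 1 + (j' - (j+1)) = j' from by omega, ← heq]; exact hy)
  have hfwd : ∀ x ∈ C j, ∀ y ∈ C (j+1), ReflTransGen P x y := by
    intro x hx y hy
    have := scc_path_reach hSCC hE 1 j (by omega) x hx y (by simpa using hy)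
    simpa using this
  have hCj := hSCC j (by omega)
  have hCj1 := hSCC (j+1) (by omega)
  have hmut : ∀ x ∈ C j ∪ C (j+1), ∀ y ∈ C j ∪ C (j+1), ReflTransGen P x y := by
    rintro x (hx | hx) y (hy | hy)
    · exact hCj.2.1 x hx y hy
    · exact hfwd x hx y hy
    · exact hback x hx y hy
    · exact hCj1.2.1 x hx y hy
  have h1 : C j ∪ C (j+1) = C j := hCj.2.2 _ Set.subset_union_left hmut
  have h2 : C j ∪ C (j+1) = C (j+1) := hCj1.2.2 _ Set.subset_union_right hmut
  exact (hE j (by omega)).1 (h1.symm.trans h2)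

/-- Turning a chain into a condensation path. -/
lemma chain_path {P : W → W → Prop} : ∀ (L : List W) (a : W), List.Chain P a L →
    ∃ (r : ℕ) (C : ℕ → Set W), (∀ j ≤ r, IsSCC P (C j)) ∧ C 0 = sccOf P a ∧
      (∀ j < r, CondEdge P (C j) (C (j+1))) ∧ (∀ x ∈ a :: L, ∃ j ≤ r, x ∈ C j) := by
  intro L
  induction L with
  | nil =>
    intro a _
    exact ⟨0, fun _ => sccOf P a, fun j _ => isSCC_sccOf P a, rfl, fun j hj => absurd hj (by omega),
      by
        intro x hx
        simp only [List.mem_singleton] at hx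
        exact ⟨0, le_rfl, hx ▸ mem_sccOf_self P a⟩⟩
  | cons b L' ih =>
    intro a hch
    simp only [List.Chain, List.chain_cons] at hch
    obtain ⟨hab, hch'⟩ := hch
    obtain ⟨r', C', hSCC', hC0', hE', hcov'⟩ := ih b hch'
    by_cases hs : sccOf P a = sccOf P b
    · refine ⟨r', C', hSCC', hC0'.trans hs.symm, hE', ?_⟩
      intro x hx
      rcases List.mem_cons.mp hx with rfl | hx'
      · exact ⟨0, by omega, by rw [hC0', ← hs]; exact mem_sccOf_self P x⟩
      · exact hcov' x hx'
    · refine ⟨r' + 1, fun j => if j = 0 then sccOf P a else C' (j - 1), ?_, by simp, ?_, ?_⟩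
      · intro j hj
        by_cases h0 : j = 0
        · simpa [h0] using isSCC_sccOf P a
        · simpa [h0] using hSCC' (j-1) (by omega)
      · intro j hj
        by_cases h0 : j = 0
        · subst h0
          simp only [if_pos rfl, if_neg (Nat.one_ne_zero)]
          refine ⟨?_, a, mem_sccOf_self P a, b, ?_, hab⟩
          · rw [show (1:ℕ) - 1 = 0 from rfl, hC0']; exact hs
          · rw [show (1:ℕ) - 1 = 0 from rfl, hC0']; exact mem_sccOf_self P b
        · have h1 : j - 1 < r' := by omega
          have := hE' (j-1) h1
          simp only [if_neg h0, if_neg (show j + 1 ≠ 0 by omega)]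
          rw [show j + 1 - 1 = (j - 1) + 1 from by omega]
          exact this
      · intro x hx
        rcases List.mem_cons.mp hx with rfl | hx'
        · exact ⟨0, by omega, by simp [mem_sccOf_self P x]⟩
        · obtain ⟨j, hj, hxj⟩ := hcov' x hx'
          exact ⟨j + 1, by omega, by simpa using hxj⟩

end SCC
section Count
variable {V : Type*} [Fintype V]

lemma ncard_le_sum_of_subset (f : ℕ → Set V) :
    ∀ (n : ℕ) (s : Set V), (s ⊆ ⋃ j ∈ Finset.range n, f j) →
      s.ncard ≤ ∑ j ∈ Finset.range n, (f j).ncard := by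
  intro n
  induction n with
  | zero => intro s hs; simp only [Finset.range_zero, Finset.sum_empty]
            have : s = ∅ := by simpa using hs
            simp [this]
  | succ n ih =>
    intro s hs
    have h1 : s \ f n ⊆ ⋃ j ∈ Finset.range n, f j := by
      intro x hx
      obtain ⟨hxs, hxf⟩ := hx
      have := hs hxs
      simp only [Set.mem_iUnion, Finset.mem_range] at this ⊢
      obtain ⟨j, hj, hxj⟩ := this
      rcases Nat.lt_succ_iff_lt_or_eq.mp hj with hj' | rfl
      · exact ⟨j, hj', hxj⟩
      · exact absurd hxj hxf
    calc s.ncard ≤ (s \ f n).ncard + (f n).ncard :=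
          Set.ncard_le_ncard_diff_add_ncard s (f n) (Set.toFinite _)
      _ ≤ (∑ j ∈ Finset.range n, (f j).ncard) + (f n).ncard := by
          exact Nat.add_le_add_right (ih _ h1) _
      _ = ∑ j ∈ Finset.range (n+1), (f j).ncard := by
          rw [Finset.sum_range_succ]

lemma ncard_biUnion_eq_sum (f : ℕ → Set V) :
    ∀ (n : ℕ), (∀ i < n, ∀ j < n, i ≠ j → Disjoint (f i) (f j)) →
      (⋃ j ∈ Finset.range n, f j).ncard = ∑ j ∈ Finset.range n, (f j).ncard := by
  intro n
  induction n with
  | zero => simp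
  | succ n ih =>
    intro hdisj
    have h1 : (⋃ j ∈ Finset.range (n+1), f j) = (⋃ j ∈ Finset.range n, f j) ∪ f n := by
      ext x
      simp only [Set.mem_iUnion, Finset.mem_range, Set.mem_union]
      constructor
      · rintro ⟨j, hj, hx⟩
        rcases Nat.lt_succ_iff_lt_or_eq.mp hj with h | rfl
        · exact Or.inl ⟨j, h, hx⟩
        · exact Or.inr hx
      · rintro (⟨j, hj, hx⟩ | hx)
        · exact ⟨j, by omega, hx⟩
        · exact ⟨n, by omega, hx⟩
    rw [h1, Set.ncard_union_eq ?hd (Set.toFinite _) (Set.toFinite _),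
      ih (fun i hi j hj hij => hdisj i (by omega) j (by omega) hij), Finset.sum_range_succ]
    case hd =>
      rw [Set.disjoint_left]
      intro x hx hxn
      simp only [Set.mem_iUnion, Finset.mem_range] at hx
      obtain ⟨j, hj, hxj⟩ := hx
      exact (Set.disjoint_left.mp (hdisj j (by omega) n (by omega) (by omega)) hxj) hxn

end Count

section SortSec
variable {V : Type*}

lemma exists_least {R : V → V → Prop} (hrefl : ∀ a, R a a)
    (htrans : ∀ {a b c}, R a b → R b c → R a c) [DecidableEq V] :
    ∀ (W : Finset V), (∀ a ∈ W, ∀ b ∈ W, R a b ∨ R b a) → W.Nonempty →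
      ∃ a ∈ W, ∀ b ∈ W, R a b := by
  intro W
  induction W using Finset.induction_on with
  | empty => intro _ h; exact absurd h (by simp)
  | @insert a W' hnotmem ih =>
    intro htot _
    by_cases hW' : W'.Nonempty
    · obtain ⟨a', ha', hleast⟩ := ih
        (fun x hx y hy => htot x (Finset.mem_insert_of_mem hx) y (Finset.mem_insert_of_mem hy)) hW'
      rcases htot a (Finset.mem_insert_self a W') a' (Finset.mem_insert_of_mem ha') with h | h
      · refine ⟨a, Finset.mem_insert_self a W', ?_⟩
        intro b hb
        rcases Finset.mem_insert.mp hb with heq | hb'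
        · rw [heq]; exact hrefl a
        · exact htrans h (hleast b hb')
      · refine ⟨a', Finset.mem_insert_of_mem ha', ?_⟩
        intro b hb
        rcases Finset.mem_insert.mp hb with heq | hb'
        · rw [heq]; exact h
        · exact hleast b hb'
    · rw [Finset.not_nonempty_iff_eq_empty] at hW'
      subst hW'
      exact ⟨a, Finset.mem_insert_self a ∅, by
        intro b hb
        rcases Finset.mem_insert.mp hb with heq | hb'
        · rw [heq]; exact hrefl a
        · exact absurd hb' (by simp)⟩

lemma exists_chain_list {R : V → V → Prop} (hrefl : ∀ a, R a a)
    (htrans : ∀ {a b c}, R a b → R b c → R a c) [DecidableEq V] :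
    ∀ (m : ℕ) (W : Finset V), W.card = m →
      (∀ a ∈ W, ∀ b ∈ W, R a b ∨ R b a) → W.Nonempty →
      ∃ (a : V) (L : List V), (∀ x, x ∈ a :: L ↔ x ∈ W) ∧ (a :: L).Nodup ∧
        List.Chain R a L ∧ ∀ b ∈ W, R a b := by
  intro m
  induction m using Nat.strong_induction_on with
  | _ m ih =>
    intro W hcard htot hne
    obtain ⟨a, haW, hleast⟩ := exists_least hrefl htrans W htot hne
    by_cases hW1 : W.erase a |>.Nonempty
    · have hc : (W.erase a).card < m := by
        rw [← hcard]
        exact Finset.card_erase_lt_of_mem haW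
      obtain ⟨a', L', hmem', hnd', hch', hleast'⟩ := ih _ hc (W.erase a) rfl
        (fun x hx y hy => htot x (Finset.mem_of_mem_erase hx) y (Finset.mem_of_mem_erase hy)) hW1
      refine ⟨a, a' :: L', ?_, ?_, ?_, hleast⟩
      · intro x
        constructor
        · intro hx
          rcases List.mem_cons.mp hx with rfl | hx'
          · exact haW
          · exact Finset.mem_of_mem_erase ((hmem' x).mp hx')
        · intro hx
          by_cases hxa : x = a
          · exact hxa ▸ List.mem_cons_self
          · exact List.mem_cons_of_mem a ((hmem' x).mpr (Finset.mem_erase.mpr ⟨hxa, hx⟩))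
      · rw [List.nodup_cons]
        refine ⟨?_, hnd'⟩
        intro ha
        have := (hmem' a).mp ha
        exact (Finset.mem_erase.mp this).1 rfl
      · simp only [List.Chain, List.chain_cons]
        refine ⟨?_, hch'⟩
        exact hleast a' (Finset.mem_of_mem_erase ((hmem' a').mp List.mem_cons_self))
    · rw [Finset.not_nonempty_iff_eq_empty] at hW1
      have hWa : W = {a} := by
        ext x
        constructor
        · intro hx
          by_cases hxa : x = a
          · simp [hxa]
          · exact absurd (Finset.mem_erase.mpr ⟨hxa, hx⟩) (by simp [hW1])
        · intro hx
          rw [Finset.mem_singleton] at hx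
          exact hx ▸ haW
      refine ⟨a, [], ?_, by simp, List.Chain.nil, hleast⟩
      intro x
      simp [hWa]

end SortSec

section Totality
variable {V : Type*} [Fintype V]

lemma hist_length (p : ℕ → V) (n : ℕ) : (hist p n).length = n := by simp [hist]

lemma hist_get (p : ℕ → V) (n j : ℕ) (hj : j < (hist p n).length) :
    (hist p n).get ⟨j, hj⟩ = p j := by
  simp [hist]

lemma find?_eq_some_of {α : Type*} (P : α → Bool) :
    ∀ (l : List α) (i : ℕ) (hi : i < l.length),
      P (l.get ⟨i, hi⟩) = true →
      (∀ j (hj : j < i), P (l.get ⟨j, by omega⟩) = false) →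
      l.find? P = some (l.get ⟨i, hi⟩) := by
  intro l
  induction l with
  | nil => intro i hi; simp at hi
  | cons a l' ih =>
    intro i hi hP hmin
    cases i with
    | zero =>
      simp only [List.get] at hP ⊢
      rw [List.find?_cons_of_pos hP]
    | succ i' =>
      have ha : P a = false := hmin 0 (by omega)
      rw [List.find?_cons_of_neg (by simp [ha])]
      exact ih i' (by simpa using hi) hP (fun j hj => hmin (j+1) (by omega))

/-- A generalisation of `avoid` starting from any time. -/
lemma stay_out (A : Arena V) (S : Set V) (p : ℕ → V) (i0 : ℕ)
    (hp : ∀ i, A.E (p i) (p (i+1)))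
    (h0 : p i0 ∉ Attr A S)
    (hadam : ∀ m, p (i0+m) ∉ A.VEve → p (i0+m+1) = tStr A S (p (i0+m))) :
    ∀ m, p (i0+m) ∉ Attr A S := by
  intro m
  induction m with
  | zero => exact h0
  | succ m ih =>
    rw [show i0 + (m+1) = i0 + m + 1 from by omega]
    by_cases hv : p (i0+m) ∈ A.VEve
    · exact eve_stay A S hv ih (hp (i0+m))
    · rw [hadam m hv]; exact tStr_avoid A S hv ih

open Classical in
lemma attr_total (A : Arena V) (s : V) {T' : Set V} {σ : Strategy V}
    (hσ : ValidStrategy A σ)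
    (hwin : ∀ p, IsPlay A s p → ConsistentEve A σ p → ∀ v ∈ T', ∃ i, p i = v)
    {x y : V} (hx : x ∈ T') (hy : y ∈ T') :
    x ∈ Attr A ({y} : Set V) ∨ y ∈ Attr A ({x} : Set V) := by
  by_cases hxy : x = y
  · exact Or.inl (hxy ▸ subset_attr A {y} rfl)
  by_contra hcon
  push_neg at hcon
  obtain ⟨h1, h2⟩ := hcon
  set Q : V → Bool := fun z => decide (z = x ∨ z = y) with hQ
  set τ : Strategy V := fun h v =>
    match (h ++ [v]).find? Q with
    | some z => if z = x then tStr A {y} v else tStr A {x} v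
    | none => defSucc A v with hτ
  have hτvalid : ValidStrategy A τ := by
    intro h v
    rw [hτ]
    rcases hfd : (h ++ [v]).find? Q with _ | z
    · simp only [hfd]; exact defSucc_edge A v
    · simp only [hfd]
      split
      · exact tStr_edge A {y} v
      · exact tStr_edge A {x} v
  set p := playOf A σ τ s with hpdef
  have hplay : IsPlay A s p := playOf_isPlay A hσ hτvalid s
  have hcons := playOf_consistentEve A σ τ s
  obtain ⟨ix, hix⟩ := hwin p hplay hcons x hx
  obtain ⟨iy, hiy⟩ := hwin p hplay hcons y hy
  have hex : ∃ i, p i = x ∨ p i = y := ⟨ix, Or.inl hix⟩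
  set i0 := Nat.find hex with hi0
  have hspec : p i0 = x ∨ p i0 = y := Nat.find_spec hex
  have hmin : ∀ j < i0, ¬(p j = x ∨ p j = y) := fun j hj => Nat.find_min hex hj
  have hfind : ∀ m, (hist p (i0 + m + 1)).find? Q = some (p i0) := by
    intro m
    have hlen : i0 < (hist p (i0+m+1)).length := by rw [hist_length]; omega
    have h3 := find?_eq_some_of Q (hist p (i0+m+1)) i0 hlen
      (by rw [hist_get]; exact decide_eq_true hspec)
      (by intro j hj; rw [hist_get]; exact decide_eq_false (hmin j hj))
    rwa [hist_get] at h3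
  have hadamτ : ∀ m, p (i0 + m) ∉ A.VEve →
      p (i0 + m + 1) = (if p i0 = x then tStr A {y} (p (i0+m)) else tStr A {x} (p (i0+m))) := by
    intro m hv
    have := playOf_consistentAdam A σ τ s (i0+m) hv
    rw [← hpdef] at this
    rw [this, hτ]
    have h4 : hist p (i0+m) ++ [p (i0+m)] = hist p (i0+m+1) := (hist_succ p (i0+m)).symm
    simp only [h4, hfind m]
  rcases hspec with hc | hc
  · -- first hit is x : stay out of Attr {y} from then on, contradicting the visit of y
    have hout : ∀ m, p (i0 + m) ∉ Attr A ({y} : Set V) := by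
      apply stay_out A {y} p i0 hplay.2 (by rw [hc]; exact h1)
      intro m hv
      rw [hadamτ m hv, if_pos hc]
    rcases Nat.lt_or_ge iy i0 with h | h
    · exact hmin iy h (Or.inr hiy)
    · have := hout (iy - i0)
      rw [show i0 + (iy - i0) = iy from by omega, hiy] at this
      exact this (subset_attr A {y} rfl)
  · -- first hit is y : symmetric
    have hcx : p i0 ≠ x := by rw [hc]; exact fun h' => hxy h'.symm
    have hout : ∀ m, p (i0 + m) ∉ Attr A ({x} : Set V) := by
      apply stay_out A {x} p i0 hplay.2 (by rw [hc]; exact h2)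
      intro m hv
      rw [hadamτ m hv, if_neg hcx]
    rcases Nat.lt_or_ge ix i0 with h | h
    · exact hmin ix h (Or.inl hix)
    · have := hout (ix - i0)
      rw [show i0 + (ix - i0) = ix from by omega, hix] at this
      exact this (subset_attr A {x} rfl)

lemma attr_start (A : Arena V) (s : V) {T' : Set V} {σ : Strategy V}
    (hσ : ValidStrategy A σ)
    (hwin : ∀ p, IsPlay A s p → ConsistentEve A σ p → ∀ v ∈ T', ∃ i, p i = v)
    {y : V} (hy : y ∈ T') : s ∈ Attr A ({y} : Set V) := by
  by_contra hs
  set τ : Strategy V := fun _ v => tStr A {y} v with hτ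
  have hτvalid : ValidStrategy A τ := fun h v => tStr_edge A {y} v
  set p := playOf A σ τ s with hpdef
  have hplay : IsPlay A s p := playOf_isPlay A hσ hτvalid s
  have hcons := playOf_consistentEve A σ τ s
  obtain ⟨i, hi⟩ := hwin p hplay hcons y hy
  have hav := stay_out A {y} p 0 hplay.2 (by rw [hplay.1]; exact hs)
    (fun m hv => by
      have := playOf_consistentAdam A σ τ s (0+m) hv
      rw [← hpdef] at this
      exact this)
  have := hav i
  rw [Nat.zero_add, hi] at this
  exact this (subset_attr A {y} rfl)

end Totality
section Main
open Relation
variable {V : Type*} [Fintype V]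

lemma attr_of_rtg (A : Arena V) (s : V) {n : ℕ} (t : Fin n → V) {u v : V}
    (h : ReflTransGen (Pedge A s t) u v) : u ∈ Attr A ({v} : Set V) := by
  induction h with
  | refl => exact subset_attr A {u} rfl
  | tail _ e ih => exact attr_trans A ih e.2.2

lemma chain_pedge_of_chainR (A : Arena V) (s : V) {n : ℕ} (t : Fin n → V) :
    ∀ (L : List V) (a : V),
      List.Chain (fun a b => a ∈ Attr A ({b} : Set V)) a L →
      (∀ x ∈ a :: L, (x = s ∨ ∃ i, x = t i)) → List.Chain (Pedge A s t) a L := by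
  intro L
  induction L with
  | nil => intro a _ _; exact List.Chain.nil
  | cons b L' ih =>
    intro a h hv
    simp only [List.Chain, List.chain_cons] at h ⊢
    exact ⟨⟨hv a List.mem_cons_self, hv b (List.mem_cons_of_mem _ List.mem_cons_self),
        h.1⟩,
      ih b h.2 (fun x hx => hv x (List.mem_cons_of_mem _ hx))⟩

lemma direction1 (A : Arena V) (s : V) {n : ℕ} (t : Fin n → V) (T' : Set V)
    (hsub : T' ⊆ {v | ∃ i, v = t i}) (σ : Strategy V) (hσ : ValidStrategy A σ)
    (hwin : ∀ p, IsPlay A s p → ConsistentEve A σ p → ∀ v ∈ T', ∃ i, p i = v) :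
    ∃ (r : ℕ) (C : ℕ → Set V), (∀ j ≤ r, IsSCC (Pedge A s t) (C j)) ∧ s ∈ C 0 ∧
      (∀ j < r, CondEdge (Pedge A s t) (C j) (C (j + 1))) ∧
      T'.ncard ≤ ∑ j ∈ Finset.range (r + 1), ({v | ∃ i, v = t i} ∩ C j).ncard := by
  classical
  set R : V → V → Prop := fun a b => a ∈ Attr A ({b} : Set V) with hR
  have hrefl : ∀ a, R a a := fun a => subset_attr A {a} rfl
  have htrans : ∀ {a b c}, R a b → R b c → R a c := fun h1 h2 => attr_trans A h1 h2
  have hfin : (insert s T' : Set V).Finite := Set.toFinite _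
  set W : Finset V := hfin.toFinset with hW
  have hmemW : ∀ x, x ∈ W ↔ (x = s ∨ x ∈ T') := by
    intro x; rw [hW, Set.Finite.mem_toFinset]; simp
  have hsW : s ∈ W := (hmemW s).mpr (Or.inl rfl)
  have hsleast : ∀ b ∈ W, R s b := by
    intro b hb
    rcases (hmemW b).mp hb with rfl | hb'
    · exact hrefl b
    · exact attr_start A s hσ hwin hb'
  have htot : ∀ a ∈ W, ∀ b ∈ W, R a b ∨ R b a := by
    intro a ha b hb
    rcases (hmemW a).mp ha with rfl | ha'
    · exact Or.inl (hsleast b hb)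
    · rcases (hmemW b).mp hb with rfl | hb'
      · exact Or.inr (hsleast a ha)
      · exact attr_total A s hσ hwin ha' hb'
  obtain ⟨a, L, hmemL, hnd, hch, hleast⟩ :=
    exists_chain_list hrefl htrans W.card W rfl htot ⟨s, hsW⟩
  have hvert : ∀ x ∈ W, (x = s ∨ ∃ i, x = t i) := by
    intro x hx
    rcases (hmemW x).mp hx with rfl | hx'
    · exact Or.inl rfl
    · exact Or.inr (hsub hx')
  have hchP : List.Chain (Pedge A s t) a L :=
    chain_pedge_of_chainR A s t L a hch (fun x hx => hvert x ((hmemL x).mp hx))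
  obtain ⟨r, C, hSCC, hC0, hE, hcov⟩ := chain_path L a hchP
  have haW : a ∈ W := (hmemL a).mp List.mem_cons_self
  have hsa : Pedge A s t s a := ⟨Or.inl rfl, hvert a haW, hsleast a haW⟩
  have has : Pedge A s t a s := ⟨hvert a haW, Or.inl rfl, hleast s hsW⟩
  refine ⟨r, C, hSCC, ?_, hE, ?_⟩
  · rw [hC0]
    exact ⟨ReflTransGen.single has, ReflTransGen.single hsa⟩
  · apply ncard_le_sum_of_subset
    intro x hxT'
    have hxW : x ∈ W := (hmemW x).mpr (Or.inr hxT')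
    obtain ⟨j, hj, hxj⟩ := hcov x ((hmemL x).mpr hxW)
    simp only [Set.mem_iUnion, Finset.mem_range]
    exact ⟨j, by omega, hsub hxT', hxj⟩

lemma direction2 (A : Arena V) (s : V) {n : ℕ} (t : Fin n → V) (r : ℕ) (C : ℕ → Set V)
    (hSCC : ∀ j ≤ r, IsSCC (Pedge A s t) (C j)) (hs0 : s ∈ C 0)
    (hE : ∀ j < r, CondEdge (Pedge A s t) (C j) (C (j + 1))) :
    ∃ T' : Set V, T' ⊆ {v | ∃ i, v = t i} ∧
      (∃ σ : Strategy V, ValidStrategy A σ ∧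
        ∀ p, IsPlay A s p → ConsistentEve A σ p → ∀ v ∈ T', ∃ i, p i = v) ∧
      (∑ j ∈ Finset.range (r + 1), ({v | ∃ i, v = t i} ∩ C j).ncard) = T'.ncard := by
  classical
  set T : Set V := {v | ∃ i, v = t i} with hT
  set P : V → V → Prop := Pedge A s t with hP
  have hdisj : ∀ i ≤ r, ∀ j ≤ r, i ≠ j → Disjoint (C i) (C j) := by
    intro i hi j hj hij
    rcases Nat.lt_or_ge i j with h | h
    · exact isSCC_disjoint (hSCC i hi) (hSCC j hj) (scc_path_nodup hSCC hE i (by omega) j h hj)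
    · exact (isSCC_disjoint (hSCC j hj) (hSCC i hi)
        (scc_path_nodup hSCC hE j (by omega) i (by omega) hi)).symm
  set T' : Set V := ⋃ j ∈ Finset.range (r+1), (T ∩ C j) with hT'
  have hsub : T' ⊆ T := by
    intro x hx
    simp only [hT', Set.mem_iUnion, Finset.mem_range] at hx
    obtain ⟨j, _, hxj, _⟩ := hx
    exact hxj
  have hsum : (∑ j ∈ Finset.range (r + 1), (T ∩ C j).ncard) = T'.ncard := by
    rw [hT', ncard_biUnion_eq_sum]
    intro i hi j hj hij
    exact Set.disjoint_of_subset Set.inter_subset_right Set.inter_subset_right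
      (hdisj i (by omega) j (by omega) hij)
  have hreach : ∀ a b : ℕ, a ≤ b → b ≤ r → ∀ x ∈ C a, ∀ y ∈ C b, ReflTransGen P x y := by
    intro a b hab hbr x hx y hy
    have := scc_path_reach hSCC hE (b - a) a (by omega) x hx y
      (by rw [show a + (b - a) = b from by omega]; exact hy)
    exact this
  set R : V → V → Prop := fun a b => a ∈ Attr A ({b} : Set V) with hRdef
  have hRTG : ∀ {x y : V}, ReflTransGen P x y → R x y := fun h => attr_of_rtg A s t h
  set blok : ℕ → List V := fun j => ((T ∩ C j) \ {s}).toFinite.toFinset.toList with hblok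
  have hblok_mem : ∀ j x, x ∈ blok j ↔ (x ∈ T ∧ x ∈ C j ∧ x ≠ s) := by
    intro j x
    rw [hblok]
    simp only [Finset.mem_toList, Set.Finite.mem_toFinset, Set.mem_diff, Set.mem_inter_iff,
      Set.mem_singleton_iff]
    tauto
  have key : ∀ m, m ≤ r + 1 →
      (List.Pairwise R ((List.range m).flatMap blok) ∧ ((List.range m).flatMap blok).Nodup) := by
    intro m
    induction m with
    | zero => intro _; simp
    | succ m ihm =>
      intro hm
      obtain ⟨ih1, ih2⟩ := ihm (by omega)
      have hsing : List.flatMap blok [m] = blok m := by simp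
      rw [List.range_succ, List.flatMap_append, hsing]
      have hmempre : ∀ x, x ∈ (List.range m).flatMap blok → ∃ j < m, x ∈ T ∧ x ∈ C j ∧ x ≠ s := by
        intro x hx
        obtain ⟨j, hj, hxj⟩ := List.mem_flatMap.mp hx
        rw [List.mem_range] at hj
        exact ⟨j, hj, (hblok_mem j x).mp hxj⟩
      constructor
      · rw [List.pairwise_append]
        refine ⟨ih1, ?_, ?_⟩
        · apply List.pairwise_of_forall_mem_list
          intro a ha b hb
          rw [hblok_mem] at ha hb
          exact hRTG ((hSCC m (by omega)).2.1 a ha.2.1 b hb.2.1)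
        · intro a ha b hb
          obtain ⟨j, hj, _, haj, _⟩ := hmempre a ha
          rw [hblok_mem] at hb
          exact hRTG (hreach j m (by omega) (by omega) a haj b hb.2.1)
      · rw [List.nodup_append]
        refine ⟨ih2, by rw [hblok]; exact Finset.nodup_toList _, ?_⟩
        intro a ha b hb hab
        subst hab
        obtain ⟨j, hj, _, haj, _⟩ := hmempre a ha
        rw [hblok_mem] at hb
        exact Set.disjoint_left.mp (hdisj j (by omega) m (by omega) (by omega)) haj hb.2.1
  obtain ⟨hpairFB, hndFB⟩ := key (r+1) le_rfl
  set FB : List V := (List.range (r+1)).flatMap blok with hFB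
  have hFB_mem : ∀ x, x ∈ FB ↔ ∃ j ≤ r, x ∈ T ∧ x ∈ C j ∧ x ≠ s := by
    intro x
    rw [hFB, List.mem_flatMap]
    constructor
    · rintro ⟨j, hj, hx⟩
      rw [List.mem_range] at hj
      exact ⟨j, by omega, (hblok_mem j x).mp hx⟩
    · rintro ⟨j, hj, hx⟩
      exact ⟨j, List.mem_range.mpr (by omega), (hblok_mem j x).mpr hx⟩
  set L : List V := s :: FB with hL
  have hpairL : List.Pairwise R L := by
    rw [hL, List.pairwise_cons]
    refine ⟨?_, hpairFB⟩
    intro y hy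
    obtain ⟨j, hj, _, hyj, _⟩ := (hFB_mem y).mp hy
    exact hRTG (hreach 0 j (by omega) hj s hs0 y hyj)
  have hndL : L.Nodup := by
    rw [hL, List.nodup_cons]
    refine ⟨?_, hndFB⟩
    intro hs'
    obtain ⟨_, _, _, _, hne⟩ := (hFB_mem s).mp hs'
    exact hne rfl
  set u : ℕ → V := fun j => L.getD j s with hu
  set k : ℕ := L.length - 1 with hk
  have hlenL : L.length = k + 1 := by rw [hk, hL]; simp
  have hu0 : u 0 = s := by rw [hu, hL]; rfl
  have hget : ∀ j (hj : j < L.length), u j = L.get ⟨j, hj⟩ := by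
    intro j hj
    rw [hu]
    exact List.getD_eq_get L s ⟨j, hj⟩
  have hchain : ∀ j, j < k → u j ∈ Attr A {u (j+1)} := by
    intro j hj
    have h1 : j < L.length := by omega
    have h2 : j + 1 < L.length := by omega
    rw [hget j h1, hget (j+1) h2]
    exact List.pairwise_iff_get.mp hpairL ⟨j, h1⟩ ⟨j+1, h2⟩ (by simp)
  have hinj : ∀ j ≤ k, ∀ j' ≤ k, u j = u j' → j = j' := by
    intro j hj j' hj' heq
    have h1 : j < L.length := by omega
    have h2 : j' < L.length := by omega
    rw [hget j h1, hget j' h2] at heq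
    have h3 := (hndL.get_inj_iff).mp heq
    exact congrArg Fin.val h3
  refine ⟨T', hsub, ⟨comp A u k, comp_valid A u k, ?_⟩, hsum⟩
  intro p hp hcons v hv
  simp only [hT', Set.mem_iUnion, Finset.mem_range] at hv
  obtain ⟨j, hjr, hvT, hvC⟩ := hv
  by_cases hvs : v = s
  · exact ⟨0, by rw [hp.1, hvs]⟩
  · have hvFB : v ∈ FB := (hFB_mem v).mpr ⟨j, by omega, hvT, hvC, hvs⟩
    have hvL : v ∈ L := by rw [hL]; exact List.mem_cons_of_mem s hvFB
    obtain ⟨idx, hidx⟩ := List.mem_iff_get.mp hvL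
    have hidxk : (idx : ℕ) ≤ k := by
      have := idx.isLt
      omega
    have hplay : IsPlay A (u 0) p := by rw [hu0]; exact hp
    obtain ⟨i, hi⟩ := comp_visits A u k hchain hinj p hplay hcons idx hidxk
    refine ⟨i, ?_⟩
    rw [hi, hget idx idx.isLt]
    simpa using hidx

end Main

/-- with singleton targets `T = {t 1, ..., t n}` and `t 0 = s`,
the maximum size of a subset `T' ⊆ T` all of whose elements Eve can guarantee
to visit equals the maximum, over paths `C 0, ..., C r` in the condensation of
the preorder graph with `s ∈ C 0`, of `Σ_j |T ∩ C j|`. -/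
theorem max_promise_eq_condensation (A : Arena V) (s : V) (n : ℕ)
    (t : Fin n → V) :
    sSup {c : ℕ | ∃ T' : Set V, T' ⊆ {v | ∃ i, v = t i} ∧
        (∃ σ : Strategy V, ValidStrategy A σ ∧
          ∀ p, IsPlay A s p → ConsistentEve A σ p → ∀ v ∈ T', ∃ i, p i = v) ∧
        c = T'.ncard} =
    sSup {c : ℕ | ∃ (r : ℕ) (C : ℕ → Set V),
        (∀ j ≤ r, IsSCC (Pedge A s t) (C j)) ∧ s ∈ C 0 ∧
        (∀ j < r, CondEdge (Pedge A s t) (C j) (C (j + 1))) ∧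
        c = ∑ j ∈ Finset.range (r + 1), ({v | ∃ i, v = t i} ∩ C j).ncard} := by
  classical
  have hLbdd : BddAbove {c : ℕ | ∃ T' : Set V, T' ⊆ {v | ∃ i, v = t i} ∧
      (∃ σ : Strategy V, ValidStrategy A σ ∧
        ∀ p, IsPlay A s p → ConsistentEve A σ p → ∀ v ∈ T', ∃ i, p i = v) ∧
      c = T'.ncard} := by
    refine ⟨Fintype.card V, ?_⟩
    rintro c ⟨T', _, _, rfl⟩
    calc T'.ncard ≤ (Set.univ : Set V).ncard :=
          Set.ncard_le_ncard (Set.subset_univ T') (Set.toFinite _)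
      _ = Fintype.card V := by rw [Set.ncard_univ, Nat.card_eq_fintype_card]
  have hsubRL : {c : ℕ | ∃ (r : ℕ) (C : ℕ → Set V),
        (∀ j ≤ r, IsSCC (Pedge A s t) (C j)) ∧ s ∈ C 0 ∧
        (∀ j < r, CondEdge (Pedge A s t) (C j) (C (j + 1))) ∧
        c = ∑ j ∈ Finset.range (r + 1), ({v | ∃ i, v = t i} ∩ C j).ncard} ⊆
      {c : ℕ | ∃ T' : Set V, T' ⊆ {v | ∃ i, v = t i} ∧
        (∃ σ : Strategy V, ValidStrategy A σ ∧
          ∀ p, IsPlay A s p → ConsistentEve A σ p → ∀ v ∈ T', ∃ i, p i = v) ∧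
        c = T'.ncard} := by
    rintro c ⟨r, C, hSCC, hs0, hE, hceq⟩
    obtain ⟨T', hsub, hwin, hsum⟩ := direction2 A s t r C hSCC hs0 hE
    exact ⟨T', hsub, hwin, by rw [hceq, hsum]⟩
  have hLne : {c : ℕ | ∃ T' : Set V, T' ⊆ {v | ∃ i, v = t i} ∧
      (∃ σ : Strategy V, ValidStrategy A σ ∧
        ∀ p, IsPlay A s p → ConsistentEve A σ p → ∀ v ∈ T', ∃ i, p i = v) ∧
      c = T'.ncard}.Nonempty := by
    refine ⟨0, ∅, by simp, ⟨fun _ v => defSucc A v, fun _ v => defSucc_edge A v,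
      fun p _ _ v hv => absurd hv (Set.notMem_empty v)⟩, by simp⟩
  have hRne : {c : ℕ | ∃ (r : ℕ) (C : ℕ → Set V),
      (∀ j ≤ r, IsSCC (Pedge A s t) (C j)) ∧ s ∈ C 0 ∧
      (∀ j < r, CondEdge (Pedge A s t) (C j) (C (j + 1))) ∧
      c = ∑ j ∈ Finset.range (r + 1), ({v | ∃ i, v = t i} ∩ C j).ncard}.Nonempty := by
    refine ⟨_, 0, fun _ => sccOf (Pedge A s t) s, fun j hj => isSCC_sccOf _ _,
      mem_sccOf_self _ _, fun j hj => absurd hj (by omega), rfl⟩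
  apply le_antisymm
  · apply csSup_le hLne
    rintro c ⟨T', hsub, ⟨σ, hσ, hwin⟩, hceq⟩
    obtain ⟨r, C, hSCC, hs0, hE, hle⟩ := direction1 A s t T' hsub σ hσ hwin
    calc c = T'.ncard := hceq
      _ ≤ ∑ j ∈ Finset.range (r + 1), ({v | ∃ i, v = t i} ∩ C j).ncard := hle
      _ ≤ _ := le_csSup (hLbdd.mono hsubRL) ⟨r, C, hSCC, hs0, hE, rfl⟩
  · exact csSup_le_csSup hLbdd hRne hsubRL
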